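/- Fix positive integers T, t and x ∈ ℝ^{Tt}. For k ∈ {2, …, Tt}: if z̃_{k−2} < 31/32, 5/7 ≤ z̃_{k−1} < 31/32, and z̃_k ∈ [31/32, 33/32], then Dominate(k−1) holds. -/

import Mathlib

open Filter Finset

/-- The `k`-th coordinate (1-indexed) of `x ∈ ℝ^d`, with out-of-range coordinates
(including the convention `x_0 = 0`) equal to `0`. -/
noncomputable def coord {d : ℕ} (x : EuclideanSpace ℝ (Fin d)) (k : ℕ) : ℝ :=
  if h : 1 ≤ k ∧ k ≤ d then x ⟨k - 1, by omega⟩ else 0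

/-- The piecewise scalar component `v_y` of the hard instance. -/
noncomputable def vFun (y x : ℝ) : ℝ :=
  if x ≤ 31 / 32 * y then x ^ 2 / 2
  else if x ≤ y then x ^ 2 / 2 - 16 * (x - 31 / 32 * y) ^ 2
  else if x ≤ 33 / 32 * y then x ^ 2 / 2 - y ^ 2 / 32 + 16 * (x - 33 / 32 * y) ^ 2
  else x ^ 2 / 2 - y ^ 2 / 32

/-- The quadratic (convex) part `q_{T,t}` of the hard instance, with the convention
`x_0 = 0` (encoded by `coord x 0 = 0`). -/
noncomputable def qFun (T t : ℕ) (x : EuclideanSpace ℝ (Fin (T * t))) : ℝ :=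
  (1 / 2) * ∑ i ∈ Finset.range t,
    ((7 / 8 * coord x (i * T) - coord x (i * T + 1)) ^ 2
      + ∑ j ∈ Finset.Icc 1 (T - 1), (coord x (i * T + j + 1) - coord x (i * T + j)) ^ 2)

/-- The reference vector `y ∈ ℝ^{Tt}` with `y_{qT+b} = (7/8)^q` for `b ∈ {1, …, T}`;
in 0-based indexing, `y i = (7/8)^(i / T)`. -/
noncomputable def yVec (T t : ℕ) : EuclideanSpace ℝ (Fin (T * t)) :=
  WithLp.toLp 2 (fun i => (7 / 8 : ℝ) ^ ((i : ℕ) / T))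

/-- The hard instance `g_{T,t}(x) = q_{T,t}(x) + Σ_{i=1}^{Tt} v_{y_i}(x_i)`. -/
noncomputable def gFun (T t : ℕ) (x : EuclideanSpace ℝ (Fin (T * t))) : ℝ :=
  qFun T t x + ∑ i : Fin (T * t), vFun (yVec T t i) (x i)

/-- Extended coordinates: `x̃_0 = 0`, `x̃_i = x_i` for `1 ≤ i ≤ Tt`, `x̃_{Tt+1} = x_{Tt}`. -/
noncomputable def xTilde (T t : ℕ) (x : EuclideanSpace ℝ (Fin (T * t))) (k : ℕ) : ℝ :=
  if k ≤ T * t then coord x k else coord x (T * t)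

/-- Extended reference coordinates: `ỹ_0 = 1`, `ỹ_i = y_i` for `1 ≤ i ≤ Tt`,
`ỹ_{Tt+1} = y_{Tt}`. -/
noncomputable def yTilde (T t : ℕ) (k : ℕ) : ℝ :=
  if k = 0 then 1
  else if k ≤ T * t then coord (yVec T t) k
  else coord (yVec T t) (T * t)

/-- The ratios `z̃_k = x̃_k / ỹ_k`. -/
noncomputable def zTilde (T t : ℕ) (x : EuclideanSpace ℝ (Fin (T * t))) (k : ℕ) : ℝ :=
  xTilde T t x k / yTilde T t k

/-- `Dominate k` holds iff `x_k = 0` or `|(∇g_{T,t}(x))_k| > 0.19·|x_k|`. -/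
def Dominate (T t : ℕ) (x : EuclideanSpace ℝ (Fin (T * t))) (k : ℕ) : Prop :=
  coord x k = 0 ∨ |coord (gradient (gFun T t) x) k| > 0.19 * |coord x k|
open Filter Finset

/-- derivative of squared positive part -/
lemma hasDerivAt_sq_max (a u : ℝ) :
    HasDerivAt (fun v : ℝ => max (v - a) 0 ^ 2) (2 * max (u - a) 0) u := by
  rcases lt_trichotomy u a with h | h | h
  · rw [max_eq_right (by linarith : u - a ≤ 0), mul_zero]
    refine (hasDerivAt_const u (0:ℝ)).congr_of_eventuallyEq ?_
    filter_upwards [eventually_lt_nhds h] with v hv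
    rw [max_eq_right (by linarith : v - a ≤ 0)]
    norm_num
  · subst h
    rw [sub_self, max_self, mul_zero]
    have h1 : HasDerivWithinAt (fun v : ℝ => max (v - u) 0 ^ 2) 0 (Set.Iic u) u := by
      refine (hasDerivWithinAt_const u _ (0:ℝ)).congr (fun v hv => ?_) ?_
      · rw [max_eq_right (by simpa using hv : v - u ≤ 0)]; norm_num
      · simp
    have h2 : HasDerivWithinAt (fun v : ℝ => max (v - u) 0 ^ 2) 0 (Set.Ici u) u := by
      have h3 : HasDerivAt (fun v : ℝ => (v - u) ^ 2) 0 u := by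
        simpa using ((hasDerivAt_id u).sub_const u).fun_pow 2
      refine h3.hasDerivWithinAt.congr (fun v hv => ?_) ?_
      · rw [max_eq_left (by simpa using hv : 0 ≤ v - u)]
      · simp
    have := h1.union h2
    rwa [Set.Iic_union_Ici, hasDerivWithinAt_univ] at this
  · rw [max_eq_left (by linarith : 0 ≤ u - a)]
    have h3 : HasDerivAt (fun v : ℝ => (v - a) ^ 2) (2 * (u - a)) u := by
      simpa using ((hasDerivAt_id u).sub_const a).fun_pow 2
    refine h3.congr_of_eventuallyEq ?_
    filter_upwards [eventually_gt_nhds h] with v hv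
    rw [max_eq_left (by linarith : 0 ≤ v - a)]

lemma vFun_eq (y : ℝ) (hy : 0 ≤ y) :
    vFun y = fun u => u ^ 2 / 2 - 16 * max (u - 31 / 32 * y) 0 ^ 2
      + 32 * max (u - y) 0 ^ 2 - 16 * max (u - 33 / 32 * y) 0 ^ 2 := by
  funext u
  unfold vFun
  split_ifs with h1 h2 h3
  · rw [max_eq_right (by linarith), max_eq_right (by linarith), max_eq_right (by linarith)]
    ring
  · push_neg at h1
    rw [max_eq_left (by linarith), max_eq_right (by linarith), max_eq_right (by linarith)]
    ring
  · push_neg at h1 h2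
    rw [max_eq_left (by linarith), max_eq_left (by linarith), max_eq_right (by linarith)]
    ring
  · push_neg at h1 h2 h3
    rw [max_eq_left (by linarith), max_eq_left (by linarith), max_eq_left (by linarith)]
    ring

lemma hasDerivAt_vFun (y : ℝ) (hy : 0 ≤ y) (u : ℝ) :
    HasDerivAt (vFun y)
      (u - 32 * max (u - 31 / 32 * y) 0 + 64 * max (u - y) 0 - 32 * max (u - 33 / 32 * y) 0) u := by
  rw [vFun_eq y hy]
  have h0 : HasDerivAt (fun u : ℝ => u ^ 2 / 2) u u := by
    simpa using (hasDerivAt_pow 2 u).div_const 2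
  have := (((h0.fun_sub ((hasDerivAt_sq_max (31/32*y) u).const_mul 16)).fun_add
    ((hasDerivAt_sq_max y u).const_mul 32)).fun_sub ((hasDerivAt_sq_max (33/32*y) u).const_mul 16))
  exact this.congr_deriv (by ring)

/-- weight of the edge ending at (1-indexed) coordinate `n` -/
noncomputable def wc (T n : ℕ) : ℝ := if n % T = 1 % T then 7/8 else 1

lemma yStep (T : ℕ) (hT : 0 < T) (n : ℕ) (hn : 2 ≤ n) :
    ((7:ℝ)/8) ^ ((n-1)/T) = wc T n * (7/8) ^ ((n-2)/T) := by
  unfold wc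
  split_ifs with h
  · have hd : T ∣ (n - 1) :=
      (Nat.modEq_iff_dvd' (by omega : 1 ≤ n)).mp (Nat.ModEq.symm h)
    obtain ⟨q, hq⟩ := hd
    have hq1 : 1 ≤ q := by
      rcases Nat.eq_zero_or_pos q with h0 | h0
      · subst h0; simp at hq; omega
      · exact h0
    obtain ⟨q', rfl⟩ : ∃ q', q = q' + 1 := ⟨q - 1, by omega⟩
    have key : ∀ P : ℕ, n - 1 = P + T → n - 2 = P + (T - 1) := fun P hP => by omega
    have h1 : n - 1 = T * q' + T := by rw [hq]; ring
    have h2 : n - 2 = T * q' + (T - 1) := key _ h1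
    rw [h1, h2, Nat.mul_add_div hT, Nat.mul_add_div hT, Nat.div_self hT,
      Nat.div_eq_of_lt (by omega)]
    rw [pow_succ]
    ring
  · have hs := Nat.div_add_mod (n - 1) T
    set b := (n - 1) / T with hb
    set s := (n - 1) % T with hsdef
    have hsT : s < T := Nat.mod_lt _ hT
    have hs0 : s ≠ 0 := by
      intro h0
      apply h
      have hn1 : n = T * b + 1 := by omega
      rw [hn1, Nat.mul_add_mod]
    have key : ∀ P : ℕ, n - 1 = P + s → n - 2 = P + (s - 1) := fun P hP => by omega
    have h2 : n - 2 = T * b + (s - 1) := key _ (by omega)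
    rw [h2, Nat.mul_add_div hT, Nat.div_eq_of_lt (by omega), one_mul, Nat.add_zero]

lemma sum_range_mul' {M : Type*} [AddCommMonoid M] (f : ℕ → M) (T t : ℕ) :
    ∑ p ∈ Finset.range (T * t), f p
      = ∑ i ∈ Finset.range t, ∑ b ∈ Finset.range T, f (i * T + b) := by
  induction t with
  | zero => simp
  | succ t ih =>
      rw [Finset.sum_range_succ, ← ih, Nat.mul_succ, Finset.sum_range_add]
      congr 1
      apply Finset.sum_congr rfl
      intro b _
      rw [Nat.mul_comm]

lemma wc_block (T i b : ℕ) (hT : 0 < T) (hb : b < T) :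
    wc T (i * T + b + 1) = if b = 0 then (7:ℝ)/8 else 1 := by
  unfold wc
  have hmod : (i * T + b + 1) % T = (b + 1) % T := by
    have : i * T + b + 1 = (b + 1) + i * T := by ring
    rw [this, Nat.add_mul_mod_self_right]
  rw [hmod]
  rcases Nat.eq_zero_or_pos b with h0 | h0
  · subst h0; simp
  · have hb1 : ¬ b = 0 := by omega
    rw [if_neg hb1]
    have hne : ¬ (b + 1) % T = 1 % T := by
      have h2T : 2 ≤ T := by omega
      have h1T : 1 % T = 1 := Nat.mod_eq_of_lt (by omega)
      rcases (by omega : b + 1 = T ∨ b + 1 < T) with h | h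
      · rw [h, Nat.mod_self, h1T]; omega
      · rw [Nat.mod_eq_of_lt h, h1T]; omega
    rw [if_neg hne]

lemma block_sum (T : ℕ) (hT : 0 < T) (c : ℕ → ℝ) (i : ℕ) :
    ∑ b ∈ Finset.range T, (wc T (i * T + b + 1) * c (i * T + b) - c (i * T + b + 1)) ^ 2
      = (7 / 8 * c (i * T) - c (i * T + 1)) ^ 2
        + ∑ j ∈ Finset.Icc 1 (T - 1), (c (i * T + j + 1) - c (i * T + j)) ^ 2 := by
  obtain ⟨T', rfl⟩ : ∃ T', T = T' + 1 := ⟨T - 1, by omega⟩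
  rw [Finset.sum_range_succ']
  rw [add_comm]
  congr 1
  · rw [wc_block (T' + 1) i 0 hT (by omega), if_pos rfl]
    norm_num
  · rw [show T' + 1 - 1 = T' from rfl]
    rw [show Finset.Icc 1 T' = Finset.Ico 1 (T' + 1) from rfl]
    rw [Finset.sum_Ico_eq_sum_range]
    apply Finset.sum_congr rfl
    intro b hb
    simp only [Finset.mem_range] at hb
    rw [wc_block (T' + 1) i (b + 1) hT (by omega), if_neg (by omega)]
    rw [show 1 + b = b + 1 from by ring]
    ring

lemma qFun_eq (T t : ℕ) (hT : 0 < T) (x : EuclideanSpace ℝ (Fin (T * t))) :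
    qFun T t x
      = (1/2) * ∑ n ∈ Finset.Icc 1 (T * t), (wc T n * coord x (n-1) - coord x n) ^ 2 := by
  unfold qFun
  congr 1
  rw [show Finset.Icc 1 (T * t) = Finset.Ico 1 (T * t + 1) from rfl]
  rw [Finset.sum_Ico_eq_sum_range]
  rw [show T * t + 1 - 1 = T * t from rfl]
  rw [sum_range_mul' (fun p => (wc T (1 + p) * coord x (1 + p - 1) - coord x (1 + p)) ^ 2) T t]
  apply Finset.sum_congr rfl
  intro i _
  rw [← block_sum T hT (fun p => coord x p) i]
  apply Finset.sum_congr rfl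
  intro b _
  have h1 : 1 + (i * T + b) = i * T + b + 1 := by ring
  rw [h1]
  norm_num

lemma differentiable_coord {d : ℕ} (n : ℕ) :
    Differentiable ℝ (fun x : EuclideanSpace ℝ (Fin d) => coord x n) := by
  by_cases h : 1 ≤ n ∧ n ≤ d
  · simp only [coord, dif_pos h]
    exact (EuclideanSpace.proj (𝕜 := ℝ) (⟨n - 1, by omega⟩ : Fin d)).differentiable
  · simp only [coord, dif_neg h]
    exact differentiable_const 0

lemma hasDerivAt_term (w p q a b : ℝ) :
    HasDerivAt (fun s : ℝ => (w * (p + s * a) - (q + s * b)) ^ 2)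
      (2 * (w * a - b) * (w * p - q)) 0 := by
  have h : HasDerivAt (fun s : ℝ => w * (p + s * a) - (q + s * b)) (w * a - b) 0 := by
    have h1 : HasDerivAt (fun s : ℝ => p + s * a) a 0 := by
      simpa using ((hasDerivAt_id (0:ℝ)).mul_const a).const_add p
    have h2 : HasDerivAt (fun s : ℝ => q + s * b) b 0 := by
      simpa using ((hasDerivAt_id (0:ℝ)).mul_const b).const_add q
    simpa using (HasDerivAt.const_mul w h1).fun_sub h2
  have h3 := h.fun_pow 2
  exact h3.congr_deriv (by ring)

set_option maxHeartbeats 1000000 in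
/-- For `k ∈ {2, …, Tt}`: if `z̃_{k-2} < 31/32`,
`5/7 ≤ z̃_{k-1} < 31/32` and `z̃_k ∈ [31/32, 33/32]`, then `Dominate (k-1)` holds. -/
theorem dominate_of_entering' (T t : ℕ) (hT : 0 < T) (ht : 0 < t)
    (x : EuclideanSpace ℝ (Fin (T * t))) (k : ℕ) (hk1 : 2 ≤ k) (hk2 : k ≤ T * t)
    (h1 : zTilde T t x (k - 2) < 31 / 32)
    (h2 : 5 / 7 ≤ zTilde T t x (k - 1)) (h2' : zTilde T t x (k - 1) < 31 / 32)
    (h3 : zTilde T t x k ∈ Set.Icc (31 / 32 : ℝ) (33 / 32)) :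
    Dominate T t x (k - 1) := by
  obtain ⟨m, rfl⟩ : ∃ m, k = m + 1 := ⟨k - 1, by omega⟩
  have hm1 : 1 ≤ m := by omega
  have hmt : m + 1 ≤ T * t := hk2
  have hm : m ≤ T * t := by omega
  rw [show m + 1 - 2 = m - 1 from by omega] at h1
  rw [show m + 1 - 1 = m from by omega] at h2 h2' ⊢
  obtain ⟨h31, h32⟩ := h3
  -- abbreviations
  set Z1 := zTilde T t x (m - 1) with hZ1def
  set Z2 := zTilde T t x m with hZ2def
  set Z3 := zTilde T t x (m + 1) with hZ3def
  set X1 := coord x (m - 1) with hX1def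
  set X2 := coord x m with hX2def
  set X3 := coord x (m + 1) with hX3def
  set Y2 := ((7:ℝ)/8) ^ ((m - 1) / T) with hY2def
  set W := wc T (m + 1) with hWdef
  have hY2 : (0:ℝ) < Y2 := by rw [hY2def]; positivity
  have hW : W = 7/8 ∨ W = 1 := by
    rw [hWdef]; unfold wc; split_ifs
    · left; rfl
    · right; rfl
  have hWpos : (0:ℝ) < W := by rcases hW with h | h <;> rw [h] <;> norm_num
  clear_value Z1 Z2 Z3 X1 X2 X3 Y2 W
  -- yTilde values
  have yT : ∀ n, 1 ≤ n → n ≤ T * t → yTilde T t n = ((7:ℝ)/8) ^ ((n - 1) / T) := by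
    intro n hn1 hn2
    unfold yTilde coord yVec
    rw [if_neg (by omega), if_pos hn2, dif_pos ⟨hn1, hn2⟩]
  -- coordinate relations
  have hX2 : X2 = Z2 * Y2 := by
    have h : Z2 = X2 / Y2 := by
      rw [hZ2def]; unfold zTilde xTilde
      rw [if_pos hm, yT m hm1 hm, ← hX2def, ← hY2def]
    rw [h, div_mul_cancel₀ _ hY2.ne']
  have hX3 : X3 = Z3 * (W * Y2) := by
    have hy3 : yTilde T t (m + 1) = W * Y2 := by
      rw [yT (m + 1) (by omega) hmt, show m + 1 - 1 = m from by omega]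
      have := yStep T hT (m + 1) (by omega)
      rw [show m + 1 - 1 = m from by omega, show m + 1 - 2 = m - 1 from by omega] at this
      rw [this, ← hWdef, ← hY2def]
    have h : Z3 = X3 / (W * Y2) := by
      rw [hZ3def]; unfold zTilde xTilde
      rw [if_pos hmt, hy3, ← hX3def]
    rw [h, div_mul_cancel₀]
    positivity
  have hL : wc T m * X1 = Z1 * Y2 := by
    by_cases hm2 : 2 ≤ m
    · have hy1 : yTilde T t (m - 1) = ((7:ℝ)/8) ^ ((m - 2) / T) := by
        rw [yT (m - 1) (by omega) (by omega), show m - 1 - 1 = m - 2 from by omega]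
      have hstep := yStep T hT m hm2
      have h : Z1 = X1 / yTilde T t (m - 1) := by
        rw [hZ1def]; unfold zTilde xTilde
        rw [if_pos (by omega : m - 1 ≤ T * t), ← hX1def]
      have hyne : yTilde T t (m - 1) ≠ 0 := by rw [hy1]; positivity
      rw [h, div_mul_eq_mul_div, hY2def, hstep, hy1]
      field_simp
    · have hm1' : m = 1 := by omega
      subst hm1'
      have hx0 : X1 = 0 := by rw [hX1def]; unfold coord; rw [dif_neg (by omega)]
      have hz0 : Z1 = 0 := by
        rw [hZ1def]; unfold zTilde xTilde yTilde coord
        norm_num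
      rw [hx0, hz0]; ring
  -- strict interior condition for coordinate m
  have hX2lt : X2 < 31 / 32 * Y2 := by nlinarith
  have hX2pos : 0 < X2 := by nlinarith
  -- the direction vector
  have hi0lt : m - 1 < T * t := by omega
  set i0 : Fin (T * t) := ⟨m - 1, hi0lt⟩ with hi0def
  set e : EuclideanSpace ℝ (Fin (T * t)) := EuclideanSpace.single i0 (1:ℝ) with hedef
  have hx_i0 : X2 = x i0 := by
    rw [hX2def]; unfold coord; rw [dif_pos ⟨hm1, hm⟩]
  have hy_i0 : yVec T t i0 = Y2 := by
    unfold yVec; rw [hY2def]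
  -- differentiability
  have hyv : ∀ i : Fin (T * t), (0:ℝ) ≤ yVec T t i := fun i => by unfold yVec; show (0:ℝ) ≤ (7/8:ℝ) ^ ((i:ℕ)/T); positivity
  have hvdiff : ∀ i : Fin (T * t), DifferentiableAt ℝ (vFun (yVec T t i)) (x i) :=
    fun i => (hasDerivAt_vFun _ (hyv i) _).differentiableAt
  have hqdiff : Differentiable ℝ (qFun T t) := by
    unfold qFun
    refine Differentiable.const_mul ?_ _
    refine Differentiable.fun_sum fun i _ => ?_
    refine Differentiable.add ?_ ?_
    · exact (((differentiable_coord _).const_mul _).sub (differentiable_coord _)).pow 2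
    · exact Differentiable.fun_sum fun j _ => ((differentiable_coord _).fun_sub (differentiable_coord _)).fun_pow 2
  have hvsum : DifferentiableAt ℝ
      (fun z : EuclideanSpace ℝ (Fin (T * t)) => ∑ i, vFun (yVec T t i) (z i)) x := by
    refine DifferentiableAt.fun_sum fun i _ => ?_
    exact DifferentiableAt.comp x (hvdiff i) ((EuclideanSpace.proj (𝕜 := ℝ) i).differentiable.differentiableAt)
  have hgdiff : DifferentiableAt ℝ (gFun T t) x := by
    unfold gFun
    exact (hqdiff.differentiableAt).add hvsum
  -- coordinates along the line
  have apply_line : ∀ (s : ℝ) (i : Fin (T * t)),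
      (x + s • e) i = x i + s * (if i = i0 then 1 else 0) := by
    intro s i
    rw [hedef]
    simp [EuclideanSpace.single_apply, mul_comm]
  have coord_line : ∀ (s : ℝ) (n : ℕ),
      coord (x + s • e) n = coord x n + s * (if n = m then 1 else 0) := by
    intro s n
    by_cases h : 1 ≤ n ∧ n ≤ T * t
    · unfold coord
      rw [dif_pos h, dif_pos h, apply_line]
      by_cases hnm : n = m
      · subst hnm
        rw [if_pos rfl, if_pos]
        rfl
      · rw [if_neg, if_neg hnm]
        intro hc
        apply hnm
        have hval := congrArg Fin.val hc
        simp only [hi0def] at hval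
        omega
    · unfold coord
      rw [dif_neg h, dif_neg h, if_neg (by omega)]
      ring
  -- derivative of the quadratic part along the line
  have hlineq : HasDerivAt (fun s : ℝ => qFun T t (x + s • e))
      ((1/2) * ∑ n ∈ Finset.Icc 1 (T * t),
        (2 * (wc T n * (if n - 1 = m then (1:ℝ) else 0) - (if n = m then 1 else 0))
          * (wc T n * coord x (n - 1) - coord x n))) 0 := by
    have hfun : (fun s : ℝ => qFun T t (x + s • e))
        = fun s => (1/2) * ∑ n ∈ Finset.Icc 1 (T * t),
            (wc T n * (coord x (n - 1) + s * (if n - 1 = m then (1:ℝ) else 0))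
              - (coord x n + s * (if n = m then 1 else 0))) ^ 2 := by
      funext s
      rw [qFun_eq T t hT]
      congr 1
      refine Finset.sum_congr rfl fun n _ => ?_
      rw [coord_line, coord_line]
    rw [hfun]
    exact HasDerivAt.const_mul _ (HasDerivAt.fun_sum fun n _ => hasDerivAt_term _ _ _ _ _)
  -- evaluate the sum
  have hDq : (1/2) * ∑ n ∈ Finset.Icc 1 (T * t),
        (2 * (wc T n * (if n - 1 = m then (1:ℝ) else 0) - (if n = m then 1 else 0))
          * (wc T n * coord x (n - 1) - coord x n))
      = (X2 - wc T m * X1) + W * (W * X2 - X3) := by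
    rw [← Finset.sum_subset (show ({m, m + 1} : Finset ℕ) ⊆ Finset.Icc 1 (T * t) by
        intro n hn
        simp only [Finset.mem_insert, Finset.mem_singleton] at hn
        simp only [Finset.mem_Icc]
        omega)]
    · rw [Finset.sum_insert (by simp), Finset.sum_singleton]
      rw [if_neg (by omega : ¬ m - 1 = m), if_pos rfl,
        if_pos (by omega : m + 1 - 1 = m), if_neg (by omega : ¬ m + 1 = m)]
      rw [show m + 1 - 1 = m from by omega, ← hX1def, ← hX2def, ← hX3def, ← hWdef]
      ring
    · intro n hn hnm
      simp only [Finset.mem_insert, Finset.mem_singleton] at hnm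
      push_neg at hnm
      simp only [Finset.mem_Icc] at hn
      rw [if_neg (by omega), if_neg (by omega)]
      ring
  -- derivative of the separable part along the line
  have hlinev : HasDerivAt
      (fun s : ℝ => ∑ i, vFun (yVec T t i) ((x + s • e) i)) X2 0 := by
    have hder : ∀ i : Fin (T * t), HasDerivAt
        (fun s : ℝ => vFun (yVec T t i) ((x + s • e) i)) (if i = i0 then X2 else 0) 0 := by
      intro i
      by_cases hi : i = i0
      · rw [if_pos hi]
        have hlt : x i < 31 / 32 * yVec T t i := by
          rw [hi, hy_i0, ← hx_i0]; exact hX2lt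
        have hev : ∀ᶠ s : ℝ in nhds 0, x i + s * 1 < 31 / 32 * yVec T t i := by
          have hc : Continuous (fun s : ℝ => x i + s * 1) := by fun_prop
          have htend := hc.tendsto 0
          simp only [zero_mul, add_zero] at htend
          exact htend.eventually_lt_const hlt
        have heq : (fun s : ℝ => vFun (yVec T t i) ((x + s • e) i))
            =ᶠ[nhds 0] fun s => (x i + s * 1) ^ 2 / 2 := by
          filter_upwards [hev] with s hs
          rw [apply_line, if_pos hi]
          unfold vFun
          rw [if_pos hs.le]
        have hd : HasDerivAt (fun s : ℝ => (x i + s * 1) ^ 2 / 2) (x i) 0 := by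
          have hax : HasDerivAt (fun s : ℝ => x i + s * 1) 1 0 := by
            simpa using ((hasDerivAt_id (0:ℝ)).mul_const 1).const_add (x i)
          have := (hax.fun_pow 2).div_const 2
          exact this.congr_deriv (by norm_num)
        have hxi : X2 = x i := by rw [hx_i0, hi]
        rw [hxi]
        exact hd.congr_of_eventuallyEq heq
      · rw [if_neg hi]
        have hconst : (fun s : ℝ => vFun (yVec T t i) ((x + s • e) i))
            = fun _ => vFun (yVec T t i) (x i) := by
          funext s
          rw [apply_line, if_neg hi]
          norm_num
        rw [hconst]
        exact hasDerivAt_const _ _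
    have hsum := HasDerivAt.fun_sum (fun i (_ : i ∈ Finset.univ) => hder i)
    simpa using hsum
  -- total derivative along the line
  have hline : HasDerivAt (fun s : ℝ => gFun T t (x + s • e))
      (((X2 - wc T m * X1) + W * (W * X2 - X3)) + X2) 0 := by
    have htot := hlineq.add hlinev
    rw [hDq] at htot
    exact htot
  -- the gradient coordinate
  have hfder : fderiv ℝ (gFun T t) x e = ((X2 - wc T m * X1) + W * (W * X2 - X3)) + X2 := by
    rw [← hgdiff.lineDeriv_eq_fderiv]
    exact hline.deriv
  have hgradval : coord (gradient (gFun T t) x) m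
      = ((X2 - wc T m * X1) + W * (W * X2 - X3)) + X2 := by
    have hco : coord (gradient (gFun T t) x) m = gradient (gFun T t) x i0 := by
      unfold coord
      rw [dif_pos ⟨hm1, hm⟩]
    rw [hco, ← hfder]
    have h2' : (inner ℝ ((InnerProductSpace.toDual ℝ (EuclideanSpace ℝ (Fin (T * t)))).symm
        (fderiv ℝ (gFun T t) x)) e : ℝ) = fderiv ℝ (gFun T t) x e :=
      InnerProductSpace.toDual_symm_apply
    rw [← h2']
    unfold gradient
    rw [hedef, EuclideanSpace.inner_single_right]
    simp
  -- conclusion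
  clear hlineq hDq hlinev hline hfder apply_line coord_line hvdiff hvsum hgdiff hqdiff hyv yT
  unfold Dominate
  right
  rw [hgradval, ← hX2def]
  have hW2 : (49:ℝ)/64 ≤ W ^ 2 ∧ W ^ 2 ≤ 1 := by
    rcases hW with h | h <;> rw [h] <;> norm_num
  have hZ23 : Z2 - Z3 ≤ 0 := by linarith
  have hWsq : W ^ 2 * (Z2 - Z3) ≥ Z2 - Z3 := by nlinarith [hW2.2]
  have hGe : X2 - wc T m * X1 + W * (W * X2 - X3) + X2
      = Y2 * (2 * Z2 - Z1 + W ^ 2 * (Z2 - Z3)) := by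
    rw [hX2, hX3, hL]
    ring
  have hE : 2 * Z2 - Z1 + W ^ 2 * (Z2 - Z3) - (19/100) * Z2 > 0 := by linarith
  have hGgt : X2 - wc T m * X1 + W * (W * X2 - X3) + X2 > (19/100) * X2 := by
    rw [hGe, hX2]
    have hmul := mul_pos hY2 hE
    have hexp : Y2 * (2 * Z2 - Z1 + W ^ 2 * (Z2 - Z3)) - 19/100 * (Z2 * Y2)
        = Y2 * (2 * Z2 - Z1 + W ^ 2 * (Z2 - Z3) - 19/100 * Z2) := by ring
    linarith [hmul, hexp]
  have hGpos : (0:ℝ) < X2 - wc T m * X1 + W * (W * X2 - X3) + X2 := by linarith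
  rw [abs_of_pos hGpos, abs_of_pos hX2pos, show (0.19:ℝ) = 19/100 from by norm_num]
  exact hGgt
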